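/- Let Λ be a finite dimensional hereditary algebra over an infinite field K. If the presentation space Hom_Λ(P(γ_1), P(γ_0)) carries a nonzero semi-invariant of determinantal weight β, and α ∈ Z^n satisfies (L^t)^{-1}(γ_0 − γ_1) = α (equivalently dim P(γ_0) − dim P(γ_1) = α), then ⟨α, β⟩ = 0, where ⟨x, y⟩ = x^t E y is the Euler-Ringel pairing. -/

import Mathlib

/-- A function on a finite dimensional vector space is a polynomial (regular) function if
it is given by a multivariate polynomial in the coordinates with respect to a basis. -/
def IsPolynomialFun (K V : Type) [Field K] [AddCommGroup V] [Module K V]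
    [FiniteDimensional K V] (σ : V → K) : Prop :=
  ∃ p : MvPolynomial (Fin (Module.finrank K V)) K,
    ∀ v : V, σ v = MvPolynomial.eval (fun j => (Module.finBasis K V).repr v j) p

/-- The determinantal character: the `K`-determinant of the action of a square matrix over
the division algebra `F` on `F^m` (by right multiplication), viewed as a `K`-linear map. -/
noncomputable def detChar (K : Type) [Field K] (F : Type) [DivisionRing F] [Algebra K F]
    (m : ℕ) (g : Matrix (Fin m) (Fin m) F) : K :=
  LinearMap.det (LinearMap.restrictScalars K (Matrix.vecMulLinear g))

/-- Let `Λ` be a finite dimensional hereditary algebra over an infinite field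
`K`.  If the presentation space `Hom_Λ(P(γ₁), P(γ₀))` (a finite dimensional `K`-vector
space `V` with commuting actions of `End_Λ(P(γ_s)) ≅ ∏ᵢ M_{γ_s(i)}(F i)`) carries a
nonzero polynomial semi-invariant of determinantal weight `β`, and `α ∈ ℤⁿ` satisfies
`Lᵀ α = γ₀ − γ₁` (equivalently `dim P(γ₀) − dim P(γ₁) = α`), then `⟨α, β⟩ = 0`, where
`⟨x, y⟩ = xᵀ E y` is the Euler–Ringel pairing with `E = L · D`, `D = diag(fᵢ)`,
`fᵢ = dim_K (F i)`. -/
lemma detChar_algebraMap (K : Type) [Field K] (F : Type) [DivisionRing F] [Algebra K F]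
    [FiniteDimensional K F] (m : ℕ) (c : K) :
    detChar K F m (algebraMap K (Matrix (Fin m) (Fin m) F) c)
      = c ^ (m * Module.finrank K F) := by
  have h : LinearMap.restrictScalars K
      (Matrix.vecMulLinear (algebraMap K (Matrix (Fin m) (Fin m) F) c))
      = c • (LinearMap.id : (Fin m → F) →ₗ[K] (Fin m → F)) := by
    ext v j
    simp [Matrix.vecMulLinear_apply, Matrix.algebraMap_eq_diagonal, Matrix.vecMul_diagonal,
      ← Algebra.commutes, ← Algebra.smul_def]
  rw [detChar, h]
  have hr : Module.finrank K (Fin m → F) = m * Module.finrank K F := by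
    simp [Module.finrank_pi_fintype]
  simp [LinearMap.det_smul, hr]

lemma zpow_finset_sum {G : Type*} [CommGroup G] {ι : Type*} (u : G) (s : Finset ι)
    (c : ι → ℤ) : u ^ (∑ i ∈ s, c i) = ∏ i ∈ s, u ^ c i := by
  classical
  induction s using Finset.induction with
  | empty => simp
  | @insert a s h ih => rw [Finset.sum_insert h, Finset.prod_insert h, zpow_add, ih]

lemma zpow_injective_of_infinite (K : Type) [Field K] [Infinite K] (a b : ℤ)
    (h : ∀ u : Kˣ, u ^ a = u ^ b) : a = b := by
  by_contra hab
  set d : ℕ := (a - b).natAbs with hd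
  have hd0 : 0 < d := Int.natAbs_pos.2 (sub_ne_zero.2 hab)
  have hroot : ∀ u : Kˣ, u ^ d = 1 := by
    intro u
    have h1 : u ^ (a - b) = 1 := by
      rw [zpow_sub, h u, mul_inv_cancel]
    rcases Int.natAbs_eq (a - b) with he | he
    · have h2 : u ^ (d : ℤ) = 1 := by rw [← he]; exact h1
      simpa using h2
    · have : u ^ (-(d : ℤ)) = 1 := by rw [← he]; exact h1
      have := congrArg (·⁻¹) this
      simpa [zpow_neg] using this
  have hfin : ({x : K | x ^ d = 1}).Finite := by
    have hp : (Polynomial.X ^ d - Polynomial.C 1 : Polynomial K) ≠ 0 :=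
      Polynomial.X_pow_sub_C_ne_zero hd0 1
    apply (Polynomial.finite_setOf_isRoot hp).subset
    intro x hx
    simp [Polynomial.IsRoot, hx.out]
  have hsub : ({0}ᶜ : Set K) ⊆ {x : K | x ^ d = 1} := by
    intro x hx
    have hx0 : x ≠ 0 := hx
    have h3 := congrArg Units.val (hroot (Units.mk0 x hx0))
    simpa using h3
  exact (Set.finite_singleton (0 : K)).infinite_compl (hfin.subset hsub)

theorem det_weight_orthogonal_to_dimension_vector
    (K : Type) [Field K] [Infinite K] (n : ℕ)
    (F : Fin n → Type) [∀ i, DivisionRing (F i)] [∀ i, Algebra K (F i)]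
    [∀ i, FiniteDimensional K (F i)]
    (γ₀ γ₁ : Fin n → ℕ) (β : Fin n → ℤ)
    (V : Type) [AddCommGroup V] [Module K V] [FiniteDimensional K V]
    (ρ₀ : (∀ i, Matrix (Fin (γ₀ i)) (Fin (γ₀ i)) (F i)) →ₐ[K] Module.End K V)
    (ρ₁ : (∀ i, Matrix (Fin (γ₁ i)) (Fin (γ₁ i)) (F i)) →ₐ[K] Module.End K V)
    (hcomm : ∀ a b, Commute (ρ₀ a) (ρ₁ b))
    (σ : V → K) (hpoly : IsPolynomialFun K V σ) (hσ : σ ≠ 0)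
    (hsemi : ∀ (g₀ : ∀ i, Matrix (Fin (γ₀ i)) (Fin (γ₀ i)) (F i)), (∀ i, IsUnit (g₀ i)) →
      ∀ (g₁ : ∀ i, Matrix (Fin (γ₁ i)) (Fin (γ₁ i)) (F i)), (∀ i, IsUnit (g₁ i)) →
      ∀ v : V, σ (ρ₀ g₀ (ρ₁ g₁ v))
        = σ v * (∏ i, detChar K (F i) (γ₀ i) (g₀ i) ^ β i)
            * ∏ i, detChar K (F i) (γ₁ i) (g₁ i) ^ β i)
    (L : Matrix (Fin n) (Fin n) ℤ) (α : Fin n → ℤ)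
    (hα : L.transpose.mulVec α = fun i => (γ₀ i : ℤ) - (γ₁ i : ℤ)) :
    dotProduct α
      ((L * Matrix.diagonal fun i => (Module.finrank K (F i) : ℤ)).mulVec β) = 0 := by
  classical
  set f : Fin n → ℤ := fun i => (Module.finrank K (F i) : ℤ) with hf
  set a : ℤ := ∑ i, ((γ₀ i : ℤ) * f i) * β i with ha
  set b : ℤ := ∑ i, ((γ₁ i : ℤ) * f i) * β i with hb
  -- choose v with σ v ≠ 0
  obtain ⟨v, hv⟩ : ∃ v, σ v ≠ 0 := by
    by_contra h
    push_neg at h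
    exact hσ (funext h)
  -- For each unit u : Kˣ, compare the two scalar actions
  have key : ∀ u : Kˣ, u ^ a = u ^ b := by
    intro u
    set c : K := (u : K) with hc
    -- the detChar products
    have hdet0 : ∀ i, detChar K (F i) (γ₀ i)
        (algebraMap K (Matrix (Fin (γ₀ i)) (Fin (γ₀ i)) (F i)) c)
        = c ^ (γ₀ i * Module.finrank K (F i)) := fun i => detChar_algebraMap K (F i) _ c
    have hdet1 : ∀ i, detChar K (F i) (γ₁ i)
        (algebraMap K (Matrix (Fin (γ₁ i)) (Fin (γ₁ i)) (F i)) c)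
        = c ^ (γ₁ i * Module.finrank K (F i)) := fun i => detChar_algebraMap K (F i) _ c
    have hdetone0 : ∀ i, detChar K (F i) (γ₀ i)
        (1 : Matrix (Fin (γ₀ i)) (Fin (γ₀ i)) (F i)) = 1 := by
      intro i
      have := detChar_algebraMap K (F i) (γ₀ i) (1 : K)
      simpa using this
    have hdetone1 : ∀ i, detChar K (F i) (γ₁ i)
        (1 : Matrix (Fin (γ₁ i)) (Fin (γ₁ i)) (F i)) = 1 := by
      intro i
      have := detChar_algebraMap K (F i) (γ₁ i) (1 : K)
      simpa using this
    -- g₀ = scalar c, g₁ = 1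
    have hu0 : ∀ i, IsUnit (algebraMap K (Matrix (Fin (γ₀ i)) (Fin (γ₀ i)) (F i)) c) :=
      fun i => u.isUnit.map (algebraMap K _)
    have hu1 : ∀ i, IsUnit (algebraMap K (Matrix (Fin (γ₁ i)) (Fin (γ₁ i)) (F i)) c) :=
      fun i => u.isUnit.map (algebraMap K _)
    have happ0 : ρ₀ (fun i => algebraMap K (Matrix (Fin (γ₀ i)) (Fin (γ₀ i)) (F i)) c)
        (ρ₁ 1 v) = c • v := by
      have h1 : (fun i => algebraMap K (Matrix (Fin (γ₀ i)) (Fin (γ₀ i)) (F i)) c)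
          = algebraMap K (∀ i, Matrix (Fin (γ₀ i)) (Fin (γ₀ i)) (F i)) c := rfl
      rw [h1, map_one, AlgHom.commutes]
      simp [Module.algebraMap_end_apply]
    have happ1 : ρ₀ 1 (ρ₁ (fun i => algebraMap K (Matrix (Fin (γ₁ i)) (Fin (γ₁ i)) (F i)) c)
        v) = c • v := by
      have h1 : (fun i => algebraMap K (Matrix (Fin (γ₁ i)) (Fin (γ₁ i)) (F i)) c)
          = algebraMap K (∀ i, Matrix (Fin (γ₁ i)) (Fin (γ₁ i)) (F i)) c := rfl
      rw [map_one, h1, AlgHom.commutes]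
      simp [Module.algebraMap_end_apply]
    have e0 := hsemi _ hu0 1 (fun i => isUnit_one) v
    have e1 := hsemi 1 (fun i => isUnit_one) _ hu1 v
    rw [happ0] at e0
    rw [happ1] at e1
    simp only [Pi.one_apply, hdet0, hdetone1, one_zpow, Finset.prod_const_one, mul_one] at e0
    simp only [Pi.one_apply, hdet1, hdetone0, one_zpow, Finset.prod_const_one, mul_one,
      one_mul] at e1
    -- rewrite products as powers of u
    have hprod : ∀ γ : Fin n → ℕ,
        (∏ i, (c ^ (γ i * Module.finrank K (F i))) ^ β i)
          = ((u ^ (∑ i, ((γ i : ℤ) * f i) * β i) : Kˣ) : K) := by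
      intro γ
      have hterm : ∀ i : Fin n, (c ^ (γ i * Module.finrank K (F i))) ^ β i
          = ((u ^ (((γ i : ℤ) * f i) * β i) : Kˣ) : K) := by
        intro i
        have hm : ((γ i : ℤ) * f i) = ((γ i * Module.finrank K (F i) : ℕ) : ℤ) := by
          push_cast; ring
        rw [hm, zpow_mul, zpow_natCast, Units.val_zpow_eq_zpow_val,
          Units.val_pow_eq_pow_val, hc]
      rw [Finset.prod_congr rfl (fun i _ => hterm i), zpow_finset_sum]
      exact (map_prod (Units.coeHom K) _ _).symm
    rw [hprod γ₀] at e0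
    rw [hprod γ₁] at e1
    have : σ v * ((u ^ a : Kˣ) : K) = σ v * ((u ^ b : Kˣ) : K) := by
      rw [← e0, ← e1]
    have h2 : ((u ^ a : Kˣ) : K) = ((u ^ b : Kˣ) : K) := mul_left_cancel₀ hv this
    exact_mod_cast h2
  have hab : a = b := zpow_injective_of_infinite K a b key
  -- linear algebra computation
  rw [Matrix.dotProduct_mulVec, ← Matrix.vecMul_vecMul]
  have h1 : Matrix.vecMul α L = fun i => (γ₀ i : ℤ) - (γ₁ i : ℤ) := by
    rw [← Matrix.mulVec_transpose]; exact hα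
  rw [h1]
  have h2 : Matrix.vecMul (fun i => (γ₀ i : ℤ) - (γ₁ i : ℤ))
      (Matrix.diagonal f) = fun i => ((γ₀ i : ℤ) - (γ₁ i : ℤ)) * f i := by
    ext i; rw [Matrix.vecMul_diagonal]
  rw [h2]
  have : dotProduct (fun i => ((γ₀ i : ℤ) - (γ₁ i : ℤ)) * f i) β = a - b := by
    rw [ha, hb, ← Finset.sum_sub_distrib]
    apply Finset.sum_congr rfl
    intro i _
    ring
  rw [this, hab, sub_self]
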